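/- Let A be an n × n real matrix (n ≥ 1) with nonnegative entries that is positive semidefinite (in particular symmetric) and primitive, i.e., there exists q ≥ 1 such that every entry of A^q is strictly positive. Let r(A) denote its spectral radius (equal to its largest eigenvalue). Then there exists a vector x ∈ ℝ^n with strictly positive entries summing to 1 such that A x = r(A) x, and for every initial vector w⁰ ∈ ℝ^n with strictly positive entries summing to 1, the sequences defined by v^{m+1} = A w^m and w^{m+1} = v^{m+1} / (Σ_j (v^{m+1})_j) for m = 0, 1, 2, … are well defined (every denominator is strictly positive), the vectors w^m converge to x as m → ∞, and the scalars Σ_j (v^m)_j converge to r(A) as m → ∞. -/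

import Mathlib

open Filter Matrix

private lemma pp_sum_pos {n : ℕ} {u : Fin n → ℝ} (h0 : ∀ i, 0 ≤ u i) (hne : u ≠ 0) :
    0 < ∑ i, u i := by
  obtain ⟨j, hj⟩ := Function.ne_iff.mp hne
  simp only [Pi.zero_apply] at hj
  exact Finset.sum_pos' (fun i _ => h0 i)
    ⟨j, Finset.mem_univ _, lt_of_le_of_ne (h0 j) (Ne.symm hj)⟩

private lemma pp_mulVec_pos {n : ℕ} {B : Matrix (Fin n) (Fin n) ℝ}
    (hB : ∀ i j, 0 < B i j) {u : Fin n → ℝ} (hu : ∀ i, 0 ≤ u i) (hu0 : u ≠ 0) (i : Fin n) :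
    0 < (B *ᵥ u) i := by
  obtain ⟨j0, hj0⟩ := Function.ne_iff.mp hu0
  simp only [Pi.zero_apply] at hj0
  have hj0' : 0 < u j0 := lt_of_le_of_ne (hu j0) (Ne.symm hj0)
  simp only [Matrix.mulVec, dotProduct]
  exact Finset.sum_pos' (fun j _ => mul_nonneg (hB i j).le (hu j))
    ⟨j0, Finset.mem_univ _, mul_pos (hB i j0) hj0'⟩

private lemma pp_mulVec_nonneg {n : ℕ} {B : Matrix (Fin n) (Fin n) ℝ}
    (hB : ∀ i j, 0 ≤ B i j) {u : Fin n → ℝ} (hu : ∀ i, 0 ≤ u i) (i : Fin n) :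
    0 ≤ (B *ᵥ u) i := by
  simp only [Matrix.mulVec, dotProduct]
  exact Finset.sum_nonneg fun j _ => mul_nonneg (hB i j) (hu j)

private lemma pp_pow_nonneg {n : ℕ} {A : Matrix (Fin n) (Fin n) ℝ}
    (h : ∀ i j, 0 ≤ A i j) : ∀ m i j, 0 ≤ (A ^ m) i j := by
  intro m
  induction m with
  | zero => intro i j; simp only [pow_zero, Matrix.one_apply]; split <;> norm_num
  | succ m ih =>
    intro i j
    rw [pow_succ, Matrix.mul_apply]
    exact Finset.sum_nonneg fun l _ => mul_nonneg (ih i l) (h l j)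

private lemma pp_pow_pos {n : ℕ} (hn : 1 ≤ n) {A : Matrix (Fin n) (Fin n) ℝ} {q : ℕ}
    (hq : ∀ i j, 0 < (A ^ q) i j) : ∀ k i j, 0 < (A ^ (q * (k + 1))) i j := by
  intro k
  induction k with
  | zero => simpa using hq
  | succ k ih =>
    intro i j
    have hsplit : A ^ (q * (k + 1 + 1)) = A ^ (q * (k + 1)) * A ^ q := by
      rw [show q * (k + 1 + 1) = q * (k + 1) + q by ring, pow_add]
    rw [hsplit, Matrix.mul_apply]
    have hne : (Finset.univ : Finset (Fin n)).Nonempty := ⟨⟨0, hn⟩, Finset.mem_univ _⟩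
    exact Finset.sum_pos (fun l _ => mul_pos (ih i l) (hq l j)) hne

private lemma pp_pow_mulVec_ne_zero {n : ℕ} (hn : 1 ≤ n) {A : Matrix (Fin n) (Fin n) ℝ}
    {q : ℕ} (hq1 : 1 ≤ q) (hqpos : ∀ i j, 0 < (A ^ q) i j)
    {u : Fin n → ℝ} (hu : ∀ i, 0 ≤ u i) (hu0 : u ≠ 0) (m : ℕ) : (A ^ m) *ᵥ u ≠ 0 := by
  intro h
  have hmN : m ≤ q * (m + 1) := le_trans (Nat.le_succ m) (Nat.le_mul_of_pos_left _ hq1)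
  have hNpos := pp_pow_pos hn hqpos m
  have hzero : (A ^ (q * (m + 1))) *ᵥ u = 0 := by
    have hsplit : A ^ (q * (m + 1)) = A ^ (q * (m + 1) - m) * A ^ m := by
      rw [← pow_add]; congr 1; omega
    rw [hsplit, ← Matrix.mulVec_mulVec, h, Matrix.mulVec_zero]
  have hpos := pp_mulVec_pos hNpos hu hu0 ⟨0, hn⟩
  rw [hzero] at hpos
  simp at hpos

theorem perron_power_iteration (n : ℕ) (hn : 1 ≤ n) (A : Matrix (Fin n) (Fin n) ℝ)
    (hnonneg : ∀ i j, 0 ≤ A i j) (hpsd : A.PosSemidef)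
    (hprim : ∃ q : ℕ, 1 ≤ q ∧ ∀ i j, 0 < (A ^ q) i j)
    (r : ℝ)
    (hr : IsGreatest {lam : ℝ | ∃ v : Fin n → ℝ, v ≠ 0 ∧ A.mulVec v = lam • v} r) :
    ∃ x : Fin n → ℝ, (∀ i, 0 < x i) ∧ (∑ i, x i = 1) ∧ A.mulVec x = r • x ∧
      ∀ w v : ℕ → Fin n → ℝ,
        (∀ i, 0 < w 0 i) → (∑ i, w 0 i = 1) →
        (∀ m : ℕ, v (m + 1) = A.mulVec (w m)) →
        (∀ m : ℕ, w (m + 1) = (∑ j, v (m + 1) j)⁻¹ • v (m + 1)) →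
        (∀ m : ℕ, 0 < ∑ j, v (m + 1) j) ∧
          Tendsto w atTop (nhds x) ∧
          Tendsto (fun m => ∑ j, v (m + 1) j) atTop (nhds r) := by
  obtain ⟨q, hq1, hq⟩ := hprim
  have hA : A.IsHermitian := hpsd.1
  set i0 : Fin n := ⟨0, hn⟩ with hi0
  set e : Fin n → Fin n → ℝ := fun k => ⇑(hA.eigenvectorBasis k) with he_def
  set lam : Fin n → ℝ := hA.eigenvalues with hlam_def
  have hei : ∀ k, A *ᵥ e k = lam k • e k := fun k => hA.mulVec_eigenvectorBasis k
  have heo : ∀ k l, e k ⬝ᵥ e l = if k = l then 1 else 0 := by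
    intro k l
    have h := orthonormal_iff_ite.mp hA.eigenvectorBasis.orthonormal k l
    rw [dotProduct_comm]
    simpa [PiLp.inner_apply, dotProduct, he_def] using h
  have henz : ∀ k, e k ≠ 0 := by
    intro k h
    have := heo k k
    rw [h] at this
    simp [dotProduct] at this
  -- dot product with a finite sum
  have hdsum : ∀ (p : Fin n → ℝ) (f : Fin n → Fin n → ℝ),
      p ⬝ᵥ (∑ l, f l) = ∑ l, p ⬝ᵥ f l := by
    intro p f
    simp only [dotProduct, Finset.sum_apply, Finset.mul_sum]
    exact Finset.sum_comm
  have hdot1 : ∀ (d : Fin n → ℝ) (k : Fin n), e k ⬝ᵥ (∑ l, d l • e l) = d k := by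
    intro d k
    rw [hdsum]
    simp only [dotProduct_smul, smul_eq_mul, heo]
    simp
  have hdecomp : ∀ p : Fin n → ℝ, p = ∑ k, (e k ⬝ᵥ p) • e k := by
    intro p
    have h := (hA.eigenvectorBasis).sum_repr' (WithLp.toLp 2 p : EuclideanSpace ℝ (Fin n))
    have hc : ∀ k, (inner ℝ (hA.eigenvectorBasis k) (WithLp.toLp 2 p : EuclideanSpace ℝ (Fin n)) : ℝ)
        = e k ⬝ᵥ p := by
      intro k; simp [PiLp.inner_apply, dotProduct, he_def, mul_comm]
    funext i
    have h2 : (∑ k, (inner ℝ (hA.eigenvectorBasis k) (WithLp.toLp 2 p : EuclideanSpace ℝ (Fin n)) : ℝ)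
        • (e k : Fin n → ℝ)) i = p i := by
      have h3 := congrArg (fun v : EuclideanSpace ℝ (Fin n) => v.ofLp i) h
      simp only [WithLp.ofLp_sum, WithLp.ofLp_smul, WithLp.ofLp_toLp] at h3
      rw [← h3]
    rw [← h2]; simp only [hc]
  have hmulsum : ∀ d : Fin n → ℝ,
      A *ᵥ (∑ k, d k • e k) = ∑ k, (lam k * d k) • e k := by
    intro d
    have h1 : A *ᵥ (∑ k, d k • e k) = ∑ k, d k • (A *ᵥ e k) := by
      rw [← A.mulVecLin_apply, map_sum]
      simp [Matrix.mulVecLin_apply]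
    rw [h1]
    refine Finset.sum_congr rfl fun k _ => ?_
    rw [hei k, smul_smul, mul_comm]
  have hlamle : ∀ k, lam k ≤ r := fun k => hr.2 ⟨e k, henz k, hei k⟩
  have hlam0 : ∀ k, 0 ≤ lam k := hpsd.eigenvalues_nonneg
  have hdote : ∀ (p : Fin n → ℝ) k, p ⬝ᵥ e k = e k ⬝ᵥ p := fun p k => dotProduct_comm _ _
  -- quadratic form identities
  have hqf : ∀ p : Fin n → ℝ, p ⬝ᵥ (A *ᵥ p) = ∑ k, lam k * ((e k ⬝ᵥ p) * (e k ⬝ᵥ p)) ∧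
      p ⬝ᵥ p = ∑ k, (e k ⬝ᵥ p) * (e k ⬝ᵥ p) := by
    intro p
    constructor
    · conv_lhs => rw [hdecomp p]
      rw [hmulsum, hdsum]
      refine Finset.sum_congr rfl fun k _ => ?_
      rw [dotProduct_smul, smul_eq_mul, hdote, ← hdecomp p, mul_assoc]
    · conv_lhs => rw [hdecomp p]
      rw [hdsum]
      refine Finset.sum_congr rfl fun k _ => ?_
      rw [dotProduct_smul, smul_eq_mul, hdote, ← hdecomp p]
  have hray : ∀ p : Fin n → ℝ, p ⬝ᵥ (A *ᵥ p) ≤ r * (p ⬝ᵥ p) := by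
    intro p
    rw [(hqf p).1, (hqf p).2, Finset.mul_sum]
    exact Finset.sum_le_sum fun k _ =>
      mul_le_mul_of_nonneg_right (hlamle k) (mul_self_nonneg _)
  have hrayeq : ∀ p : Fin n → ℝ, p ⬝ᵥ (A *ᵥ p) = r * (p ⬝ᵥ p) → A *ᵥ p = r • p := by
    intro p hp
    have h3 : ∑ k, (r - lam k) * ((e k ⬝ᵥ p) * (e k ⬝ᵥ p)) = 0 := by
      have : ∑ k, (r - lam k) * ((e k ⬝ᵥ p) * (e k ⬝ᵥ p))
          = r * (p ⬝ᵥ p) - p ⬝ᵥ (A *ᵥ p) := by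
        rw [(hqf p).1, (hqf p).2, Finset.mul_sum, ← Finset.sum_sub_distrib]
        exact Finset.sum_congr rfl fun k _ => by ring
      rw [this, hp, sub_self]
    have h4 : ∀ k, (r - lam k) * ((e k ⬝ᵥ p) * (e k ⬝ᵥ p)) = 0 := by
      intro k
      refine (Finset.sum_eq_zero_iff_of_nonneg fun k _ => ?_).mp h3 k (Finset.mem_univ k)
      exact mul_nonneg (sub_nonneg.mpr (hlamle k)) (mul_self_nonneg _)
    have h5 : ∀ k, lam k * (e k ⬝ᵥ p) = r * (e k ⬝ᵥ p) := by
      intro k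
      rcases mul_eq_zero.mp (h4 k) with h | h
      · rw [sub_eq_zero] at h; rw [h]
      · rw [mul_self_eq_zero.mp h]; ring
    conv_lhs => rw [hdecomp p]
    rw [hmulsum]
    conv_rhs => rw [hdecomp p]
    rw [Finset.smul_sum]
    exact Finset.sum_congr rfl fun k _ => by rw [h5 k, mul_smul]
  -- double-sum expansion
  have hexpand : ∀ p : Fin n → ℝ, p ⬝ᵥ (A *ᵥ p) = ∑ i, ∑ j, A i j * (p i * p j) := by
    intro p
    simp only [dotProduct, Matrix.mulVec, Finset.mul_sum]
    exact Finset.sum_congr rfl fun i _ => Finset.sum_congr rfl fun j _ => by ring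
  -- absolute value of an r-eigenvector is an r-eigenvector
  have habs : ∀ z : Fin n → ℝ, z ≠ 0 → A *ᵥ z = r • z →
      A *ᵥ (fun i => |z i|) = r • (fun i => |z i|) := by
    intro z hz0 hz
    set u : Fin n → ℝ := fun i => |z i| with hu
    have hzz : z ⬝ᵥ z = u ⬝ᵥ u := by
      refine Finset.sum_congr rfl fun i _ => ?_
      simp only [hu]; rw [abs_mul_abs_self]
    have h1 : z ⬝ᵥ (A *ᵥ z) = r * (u ⬝ᵥ u) := by
      rw [hz, dotProduct_smul, smul_eq_mul, hzz]
    have h2 : z ⬝ᵥ (A *ᵥ z) ≤ u ⬝ᵥ (A *ᵥ u) := by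
      rw [hexpand z, hexpand u]
      refine Finset.sum_le_sum fun i _ => Finset.sum_le_sum fun j _ => ?_
      refine mul_le_mul_of_nonneg_left ?_ (hnonneg i j)
      calc z i * z j ≤ |z i * z j| := le_abs_self _
        _ = u i * u j := abs_mul _ _
    exact hrayeq u (le_antisymm (hray u) (by rw [← h1]; exact h2))
  have hpowgen : ∀ (z : Fin n → ℝ), A *ᵥ z = r • z → ∀ m, (A ^ m) *ᵥ z = (r ^ m) • z := by
    intro z hz m
    induction m with
    | zero => simp [Matrix.one_mulVec]
    | succ m ih =>
      rw [_root_.pow_succ', ← Matrix.mulVec_mulVec, ih, Matrix.mulVec_smul, hz, smul_smul, ← _root_.pow_succ]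
  -- the positive eigenvector machine
  obtain ⟨v0, hv00, hv0⟩ := hr.1
  set u0 : Fin n → ℝ := fun i => |v0 i| with hu0def
  have hu0nn : ∀ i, 0 ≤ u0 i := fun i => abs_nonneg _
  have hu0ne : u0 ≠ 0 := by
    intro h
    exact hv00 (funext fun i => abs_eq_zero.mp (congrFun h i))
  have hu0e : A *ᵥ u0 = r • u0 := habs v0 hv00 hv0
  have hu0q : ∀ i, 0 < r ^ q * u0 i := by
    intro i
    have h := pp_mulVec_pos hq hu0nn hu0ne i
    rw [hpowgen u0 hu0e q] at h
    simpa using h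
  have hrq : 0 < r ^ q := by
    have h := hu0q i0
    nlinarith [hu0nn i0]
  have hrpos : 0 < r := by
    have hr0 : 0 ≤ r := by
      have hpos : 0 < u0 i0 := by nlinarith [hu0q i0]
      have hnn := pp_mulVec_nonneg hnonneg hu0nn i0
      rw [hu0e] at hnn
      simp only [Pi.smul_apply, smul_eq_mul] at hnn
      nlinarith
    rcases hr0.lt_or_eq with h | h
    · exact h
    · exfalso; rw [← h] at hrq; rw [zero_pow (by omega)] at hrq; exact lt_irrefl _ hrq
  -- every r-eigenvector has all entries nonzero
  have hposabs : ∀ z : Fin n → ℝ, z ≠ 0 → A *ᵥ z = r • z → ∀ i, 0 < |z i| := by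
    intro z hz0 hz i
    set u : Fin n → ℝ := fun i => |z i| with hu
    have hune : u ≠ 0 := fun h => hz0 (funext fun i => abs_eq_zero.mp (congrFun h i))
    have hue : A *ᵥ u = r • u := habs z hz0 hz
    have h := pp_mulVec_pos hq (fun i => abs_nonneg _) hune i
    rw [hpowgen u hue q] at h
    simp only [Pi.smul_apply, smul_eq_mul] at h
    nlinarith [abs_nonneg (z i)]
  -- eigenspace is one-dimensional
  have huniq : ∀ a b : Fin n → ℝ, a ≠ 0 → b ≠ 0 → A *ᵥ a = r • a → A *ᵥ b = r • b →
      ∃ t : ℝ, t ≠ 0 ∧ b = t • a := by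
    intro a b ha0 hb0 ha hb
    have hai0 : a i0 ≠ 0 := by
      have := hposabs a ha0 ha i0
      intro h; rw [h] at this; simp at this
    have hbi0 : b i0 ≠ 0 := by
      have := hposabs b hb0 hb i0
      intro h; rw [h] at this; simp at this
    set cvec : Fin n → ℝ := a i0 • b - b i0 • a with hcv
    have hce : A *ᵥ cvec = r • cvec := by
      rw [hcv, Matrix.mulVec_sub, Matrix.mulVec_smul, Matrix.mulVec_smul, ha, hb,
        smul_sub, smul_comm (a i0) r, smul_comm (b i0) r]
    have hc0 : cvec i0 = 0 := by simp [hcv]; ring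
    have hczero : cvec = 0 := by
      by_contra hne
      have := hposabs cvec hne hce i0
      rw [hc0] at this; simp at this
    refine ⟨b i0 / a i0, div_ne_zero hbi0 hai0, ?_⟩
    funext i
    have h := congrFun hczero i
    simp only [hcv, Pi.sub_apply, Pi.smul_apply, smul_eq_mul, Pi.zero_apply] at h
    have : a i0 * b i = b i0 * a i := by linarith
    simp only [Pi.smul_apply, smul_eq_mul]
    field_simp
    linarith [this]
  -- construct x
  set s0 : ℝ := ∑ i, u0 i with hs0def
  have hs0 : 0 < s0 := pp_sum_pos hu0nn hu0ne
  set x : Fin n → ℝ := s0⁻¹ • u0 with hxdef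
  have hxpos : ∀ i, 0 < x i := by
    intro i
    have h := hu0q i
    have : 0 < u0 i := by nlinarith
    exact mul_pos (inv_pos.mpr hs0) this
  have hxsum : ∑ i, x i = 1 := by
    simp only [hxdef, Pi.smul_apply, smul_eq_mul, ← Finset.mul_sum, ← hs0def]
    exact inv_mul_cancel₀ hs0.ne'
  have hxe : A *ᵥ x = r • x := by
    rw [hxdef, Matrix.mulVec_smul, hu0e, smul_comm]
  have hx0 : x ≠ 0 := by
    intro h
    have := hxpos i0
    rw [h] at this; simp at this
  have hxx : 0 < x ⬝ᵥ x :=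
    Finset.sum_pos (fun i _ => mul_pos (hxpos i) (hxpos i)) ⟨i0, Finset.mem_univ _⟩
  -- there is a unique index k0 with lam k0 = r
  have hcoef : ∀ k, lam k * (e k ⬝ᵥ x) = r * (e k ⬝ᵥ x) := by
    intro k
    have h1 : e k ⬝ᵥ (A *ᵥ x) = lam k * (e k ⬝ᵥ x) := by
      conv_lhs => rw [hdecomp x, hmulsum]
      rw [hdot1]
    have h2 : e k ⬝ᵥ (A *ᵥ x) = r * (e k ⬝ᵥ x) := by
      rw [hxe, dotProduct_smul, smul_eq_mul]
    rw [← h1, h2]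
  have hex : ∃ k, e k ⬝ᵥ x ≠ 0 := by
    by_contra h
    push_neg at h
    have : x = 0 := by
      conv_lhs => rw [hdecomp x]
      refine Finset.sum_eq_zero fun k _ => by rw [h k, zero_smul]
    exact hx0 this
  obtain ⟨k0, hk0c⟩ := hex
  have hk0 : lam k0 = r := mul_right_cancel₀ hk0c (hcoef k0)
  have hek0 : A *ᵥ e k0 = r • e k0 := by rw [hei k0, hk0]
  obtain ⟨t, htne, hte⟩ := huniq x (e k0) hx0 (henz k0) hxe hek0
  -- spectral gap
  have hgap : ∀ k, k ≠ k0 → lam k < r := by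
    intro k hk
    rcases (hlamle k).lt_or_eq with h | h
    · exact h
    · exfalso
      obtain ⟨t1, ht1ne, ht1⟩ := huniq x (e k) hx0 (henz k) hxe (by rw [hei k, h])
      have horth := heo k k0
      rw [if_neg hk, ht1, hte, smul_dotProduct, dotProduct_smul] at horth
      simp only [smul_eq_mul] at horth
      have : t1 * (t * (x ⬝ᵥ x)) ≠ 0 := by positivity
      exact this horth
  refine ⟨x, hxpos, hxsum, hxe, ?_⟩
  intro w v hw0pos hw0sum hvrec hwrec
  set y : ℕ → Fin n → ℝ := fun m => (A ^ m) *ᵥ w 0 with hydef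
  set S : ℕ → ℝ := fun m => ∑ i, y m i with hSdef
  have hw0nn : ∀ i, 0 ≤ w 0 i := fun i => (hw0pos i).le
  have hw0ne : w 0 ≠ 0 := by
    intro h; have := hw0pos i0; rw [h] at this; simp at this
  have hynn : ∀ m i, 0 ≤ y m i := fun m i =>
    pp_mulVec_nonneg (pp_pow_nonneg hnonneg m) hw0nn i
  have hyne : ∀ m, y m ≠ 0 := fun m => pp_pow_mulVec_ne_zero hn hq1 hq hw0nn hw0ne m
  have hS : ∀ m, 0 < S m := fun m => pp_sum_pos (hynn m) (hyne m)
  have hy0 : y 0 = w 0 := by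
    show (A ^ 0) *ᵥ w 0 = w 0
    rw [pow_zero, Matrix.one_mulVec]
  have hS0 : S 0 = 1 := by
    show ∑ i, y 0 i = 1
    rw [hy0]; exact hw0sum
  have hysucc : ∀ m, y (m + 1) = A *ᵥ y m := by
    intro m
    show (A ^ (m + 1)) *ᵥ w 0 = A *ᵥ ((A ^ m) *ᵥ w 0)
    rw [Matrix.mulVec_mulVec, ← _root_.pow_succ']
  have hrm : ∀ m, (r : ℝ) ^ m ≠ 0 := fun m => pow_ne_zero _ hrpos.ne'
  have hw : ∀ m, w m = (S m)⁻¹ • y m := by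
    intro m
    induction m with
    | zero => rw [hy0, hS0]; simp
    | succ m ih =>
      have hv1 : v (m + 1) = (S m)⁻¹ • y (m + 1) := by
        rw [hvrec m, ih, Matrix.mulVec_smul, ← hysucc]
      have hsum : (∑ j, v (m + 1) j) = (S m)⁻¹ * S (m + 1) := by
        rw [hv1]
        simp only [Pi.smul_apply, smul_eq_mul, ← Finset.mul_sum]
        rfl
      rw [hwrec m, hsum, hv1, smul_smul]
      congr 1
      rw [mul_inv, inv_inv, mul_comm (S m) (S (m + 1))⁻¹, mul_assoc,
        mul_inv_cancel₀ (hS m).ne', mul_one]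
  have hvsum : ∀ m, (∑ j, v (m + 1) j) = (S m)⁻¹ * S (m + 1) := by
    intro m
    rw [hvrec m, hw m, Matrix.mulVec_smul, ← hysucc]
    simp only [Pi.smul_apply, smul_eq_mul, ← Finset.mul_sum]
    rfl
  have goal1 : ∀ m, 0 < ∑ j, v (m + 1) j := by
    intro m
    rw [hvsum m]
    exact mul_pos (inv_pos.mpr (hS m)) (hS (m + 1))
  set c : Fin n → ℝ := fun k => e k ⬝ᵥ w 0 with hcdef
  have hyform : ∀ m, y m = ∑ k, (c k * lam k ^ m) • e k := by
    intro m
    induction m with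
    | zero =>
      rw [hy0]
      conv_lhs => rw [hdecomp (w 0)]
      exact Finset.sum_congr rfl fun k _ => by rw [pow_zero, mul_one]
    | succ m ih =>
      rw [hysucc m, ih, hmulsum]
      refine Finset.sum_congr rfl fun k _ => ?_
      congr 1
      ring
  have hcc : c k0 = t * (x ⬝ᵥ w 0) := by
    show e k0 ⬝ᵥ w 0 = t * (x ⬝ᵥ w 0)
    rw [hte, smul_dotProduct, smul_eq_mul]
  have hxw : 0 < x ⬝ᵥ w 0 :=
    Finset.sum_pos (fun i _ => mul_pos (hxpos i) (hw0pos i)) ⟨i0, Finset.mem_univ _⟩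
  set P : ℝ := t ^ 2 * (x ⬝ᵥ w 0) with hPdef
  have hP : 0 < P := mul_pos (by positivity) hxw
  have hPe : ∀ i, c k0 * e k0 i = P * x i := by
    intro i
    have h1 : e k0 i = t * x i := by rw [hte]; rfl
    rw [hcc, h1, hPdef]; ring
  have hylim : ∀ i, Tendsto (fun m => (r ^ m)⁻¹ * y m i) atTop (nhds (P * x i)) := by
    intro i
    have hform : ∀ m, (r ^ m)⁻¹ * y m i = ∑ k, c k * (lam k / r) ^ m * e k i := by
      intro m
      rw [hyform m]
      simp only [Finset.sum_apply, Pi.smul_apply, smul_eq_mul, Finset.mul_sum]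
      refine Finset.sum_congr rfl fun k _ => ?_
      rw [div_pow]
      field_simp
    have hlim : Tendsto (fun m => ∑ k, c k * (lam k / r) ^ m * e k i) atTop
        (nhds (∑ k, if k = k0 then c k * e k i else 0)) := by
      refine tendsto_finset_sum _ fun k _ => ?_
      by_cases hk : k = k0
      · subst hk
        have hconst : ∀ m, c k * (lam k / r) ^ m * e k i = c k * e k i := by
          intro m
          rw [hk0, div_self hrpos.ne', one_pow, mul_one]
        simp only [if_pos rfl]
        exact tendsto_const_nhds.congr fun m => (hconst m).symm
      · have h1 : 0 ≤ lam k / r := div_nonneg (hlam0 k) hrpos.le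
        have h2 : lam k / r < 1 := (div_lt_one hrpos).mpr (hgap k hk)
        have h3 := tendsto_pow_atTop_nhds_zero_of_lt_one h1 h2
        have h4 : Tendsto (fun m => c k * (lam k / r) ^ m * e k i) atTop
            (nhds (c k * 0 * e k i)) := (h3.const_mul (c k)).mul_const (e k i)
        simpa [if_neg hk] using h4
    have hval : (∑ k, if k = k0 then c k * e k i else 0) = P * x i := by
      rw [Finset.sum_ite_eq' Finset.univ k0 (fun k => c k * e k i),
        if_pos (Finset.mem_univ k0)]
      exact hPe i
    rw [← hval]
    exact hlim.congr fun m => (hform m).symm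
  have hSlim : Tendsto (fun m => (r ^ m)⁻¹ * S m) atTop (nhds P) := by
    have h1 : ∀ m, (r ^ m)⁻¹ * S m = ∑ i, (r ^ m)⁻¹ * y m i := by
      intro m
      show (r ^ m)⁻¹ * ∑ i, y m i = _
      rw [Finset.mul_sum]
    have h2 : Tendsto (fun m => ∑ i, (r ^ m)⁻¹ * y m i) atTop (nhds (∑ i, P * x i)) :=
      tendsto_finset_sum _ fun i _ => hylim i
    have h3 : (∑ i, P * x i) = P := by rw [← Finset.mul_sum, hxsum, mul_one]
    rw [← h3]
    exact h2.congr fun m => (h1 m).symm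
  have goal2 : Tendsto w atTop (nhds x) := by
    rw [tendsto_pi_nhds]
    intro i
    have hform : ∀ m, w m i = ((r ^ m)⁻¹ * S m)⁻¹ * ((r ^ m)⁻¹ * y m i) := by
      intro m
      rw [hw m]
      simp only [Pi.smul_apply, smul_eq_mul]
      rw [mul_inv, inv_inv]
      field_simp
    have h := (hSlim.inv₀ hP.ne').mul (hylim i)
    have hval : P⁻¹ * (P * x i) = x i := by field_simp
    rw [← hval]
    exact h.congr fun m => (hform m).symm
  have goal3 : Tendsto (fun m => ∑ j, v (m + 1) j) atTop (nhds r) := by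
    have hform : ∀ m, (∑ j, v (m + 1) j)
        = ((r ^ m)⁻¹ * S m)⁻¹ * ((r ^ (m + 1))⁻¹ * S (m + 1)) * r := by
      intro m
      rw [hvsum m, mul_inv, inv_inv, _root_.pow_succ]
      field_simp [hrpos.ne', (hS m).ne']
    have h1 : Tendsto (fun m => (r ^ (m + 1))⁻¹ * S (m + 1)) atTop (nhds P) :=
      hSlim.comp (tendsto_add_atTop_nat 1)
    have h := ((hSlim.inv₀ hP.ne').mul h1).mul_const r
    have hval : P⁻¹ * P * r = r := by field_simp
    rw [← hval]
    exact h.congr fun m => (hform m).symm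
  exact ⟨goal1, goal2, goal3⟩
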